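/- If f is a continuously differentiable function on I and 0 < a < b, then there exists δ > 0 such that B(N̂(f,a), δ) ⊂ N̂(f,b) and B(Ň(f,a), δ) ⊂ Ň(f,b). -/

import Mathlib

open Filter Topology TopologicalSpace Set MeasureTheory

noncomputable section

/-- The unit interval `I = [0,1]` as a type. -/
abbrev UI : Type := ↥(Set.Icc (0:ℝ) 1)

/-- The space `𝒦` of closed subsets of `I`, with the (extended) Hausdorff metric topology. -/
abbrev KSp : Type := TopologicalSpace.Closeds UI

/-- The open `r`-neighbourhood of a set `A` within `I`. -/
def nbhd (A : Set UI) (r : ℝ) : Set UI := ⋃ a ∈ A, Metric.ball a r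

/-- Upper right Dini derivative `D⁺f(x)`, as an extended real. -/
def DiniSupR (f : UI → ℝ) (x : UI) : EReal :=
  Filter.limsup (fun y : UI => (((f y - f x) / ((y : ℝ) - (x : ℝ))) : EReal)) (𝓝[>] x)

/-- Lower right Dini derivative `D₊f(x)`. -/
def DiniInfR (f : UI → ℝ) (x : UI) : EReal :=
  Filter.liminf (fun y : UI => (((f y - f x) / ((y : ℝ) - (x : ℝ))) : EReal)) (𝓝[>] x)

/-- Upper left Dini derivative `D⁻f(x)`. -/
def DiniSupL (f : UI → ℝ) (x : UI) : EReal :=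
  Filter.limsup (fun y : UI => (((f y - f x) / ((y : ℝ) - (x : ℝ))) : EReal)) (𝓝[<] x)

/-- Lower left Dini derivative `D₋f(x)`. -/
def DiniInfL (f : UI → ℝ) (x : UI) : EReal :=
  Filter.liminf (fun y : UI => (((f y - f x) / ((y : ℝ) - (x : ℝ))) : EReal)) (𝓝[<] x)

/-- `x` is a knot point of `f`. -/
def IsKnotPoint (f : UI → ℝ) (x : UI) : Prop :=
  (0 < (x:ℝ) ∧ (x:ℝ) < 1 ∧ DiniSupR f x = ⊤ ∧ DiniSupL f x = ⊤ ∧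
      DiniInfR f x = ⊥ ∧ DiniInfL f x = ⊥) ∨
  ((x:ℝ) = 0 ∧ DiniSupR f x = ⊤ ∧ DiniInfR f x = ⊥) ∨
  ((x:ℝ) = 1 ∧ DiniSupL f x = ⊤ ∧ DiniInfL f x = ⊥)

/-- `N(f)`: the set of points of `I` that are not knot points of `f`. -/
def NonKnot (f : UI → ℝ) : Set UI := {x | ¬ IsKnotPoint f x}

/-- `S` is an `Fσ` subset of `I`. -/
def IsFsigma (S : Set UI) : Prop :=
  ∃ F : ℕ → Set UI, (∀ n, IsClosed (F n)) ∧ S = ⋃ n, F n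

/-- `N⁺(f,a)`. -/
def NplusUp (f : UI → ℝ) (a : ℝ) : Set UI :=
  {x | (x:ℝ) ≤ 1 - 2^(-a) ∧
    ∀ y : UI, (x:ℝ) ≤ (y:ℝ) → (y:ℝ) ≤ (x:ℝ) + 2^(-a) →
      f y - f x ≤ a * ((y:ℝ) - (x:ℝ))}

/-- `N₊(f,a)`. -/
def NplusLow (f : UI → ℝ) (a : ℝ) : Set UI :=
  {x | (x:ℝ) ≤ 1 - 2^(-a) ∧
    ∀ y : UI, (x:ℝ) ≤ (y:ℝ) → (y:ℝ) ≤ (x:ℝ) + 2^(-a) →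
      -a * ((y:ℝ) - (x:ℝ)) ≤ f y - f x}

/-- `N⁻(f,a)`. -/
def NminusUp (f : UI → ℝ) (a : ℝ) : Set UI :=
  {x | 2^(-a) ≤ (x:ℝ) ∧
    ∀ y : UI, (x:ℝ) - 2^(-a) ≤ (y:ℝ) → (y:ℝ) ≤ (x:ℝ) →
      a * ((y:ℝ) - (x:ℝ)) ≤ f y - f x}

/-- `N₋(f,a)`. -/
def NminusLow (f : UI → ℝ) (a : ℝ) : Set UI :=
  {x | 2^(-a) ≤ (x:ℝ) ∧
    ∀ y : UI, (x:ℝ) - 2^(-a) ≤ (y:ℝ) → (y:ℝ) ≤ (x:ℝ) →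
      f y - f x ≤ -a * ((y:ℝ) - (x:ℝ))}

/-- `N̂(f,a) = N⁺(f,a) ∪ N₋(f,a)`. -/
def Nhat (f : UI → ℝ) (a : ℝ) : Set UI := NplusUp f a ∪ NminusLow f a

/-- `Ň(f,a) = N₊(f,a) ∪ N⁻(f,a)`. -/
def Ncheck (f : UI → ℝ) (a : ℝ) : Set UI := NplusLow f a ∪ NminusUp f a

/-- `N(f,a)`. -/
def NN (f : UI → ℝ) (a : ℝ) : Set UI := Nhat f a ∪ Ncheck f a

/-- `f : I → ℝ` is continuously differentiable on `I`. -/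
def IsC1 (f : UI → ℝ) : Prop :=
  ContDiffOn ℝ 1 (Set.IccExtend (zero_le_one : (0:ℝ) ≤ 1) f) (Set.Icc (0:ℝ) 1)

/-- `φ` is a bump function of height `h` and width `w` located at `H1` and `H2`. -/
def IsBump (φ : C(UI, ℝ)) (h w : ℝ) (H1 H2 : Set UI) : Prop :=
  IsC1 ⇑φ ∧ ‖φ‖ = h ∧ (∀ x ∈ H1, φ x = h) ∧ (∀ x ∈ H2, φ x = -h) ∧
  {x : UI | 0 < φ x} ⊆ nbhd H1 w ∧ {x : UI | φ x < 0} ⊆ nbhd H2 w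

/-- The shifted sequence `n^k`. -/
def shiftSeq (n : ℕ → ℕ) (k : ℕ) : ℕ → ℕ := fun j => n (j + k)

/-- The index set `A_j^m(n) = [n_j] ∪ ⋃_{i=j}^{m-1} {n_i+1, …, n_i+j-1}`. -/
def Aset (n : ℕ → ℕ) (j m : ℕ) : Set ℕ :=
  Set.Icc 1 (n j) ∪ ⋃ i ∈ Set.Ico j m, Set.Icc (n i + 1) (n i + (j - 1))

/-- `n ∈ Z`: sequence of positive integers with `n_{j+1} ≥ n_j + j`. -/
def memZ (n : ℕ → ℕ) : Prop := ∀ j, 1 ≤ j → 1 ≤ n j ∧ n j + j ≤ n (j + 1)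

/-- `δ ∈ Y`: strictly decreasing sequence in `(0,1)` tending to `0`. -/
def memY (δ : ℕ → ℝ) : Prop :=
  (∀ j, 1 ≤ j → 0 < δ j ∧ δ j < 1) ∧ (∀ j, 1 ≤ j → δ (j + 1) < δ j) ∧
    Filter.Tendsto δ Filter.atTop (𝓝 0)

/-- `a ∈ X`: strictly increasing sequence of positive reals tending to `∞`. -/
def memX (a : ℕ → ℝ) : Prop :=
  (∀ j, 1 ≤ j → 0 < a j) ∧ (∀ j, 1 ≤ j → a j < a (j + 1)) ∧
    Filter.Tendsto a Filter.atTop Filter.atTop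

/-- `K ∈ 𝒮_k(n,δ)`. -/
def memS (K : ℕ → KSp) (n : ℕ → ℕ) (δ : ℕ → ℝ) (k : ℕ) : Prop :=
  ∀ j m, 2 ≤ j → j + 1 ≤ m →
    (⋃ i ∈ Aset (shiftSeq n k) j m \ Aset (shiftSeq n k) j (m - 1), (K i : Set UI))
      ⊆ ⋃ i ∈ Aset (shiftSeq n k) (j - 1) (m - 1), nbhd (K i : Set UI) (δ m)

/-- `(K, f, n, δ, a, b) ∈ 𝒴_k`. -/
def memYk (K : ℕ → KSp) (f : C(UI, ℝ)) (n : ℕ → ℕ) (δ : ℕ → ℝ) (a b : ℕ → ℝ)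
    (k : ℕ) : Prop :=
  memZ n ∧ memY δ ∧ memX a ∧ memX b ∧ memS K n δ k ∧
  ∀ j m, 1 ≤ j → j ≤ m →
    NN ⇑f (a j) ⊆ (⋃ i ∈ Aset (shiftSeq n k) j m, nbhd (K i : Set UI) (δ m)) ∧
    (⋃ i ∈ Aset n j m, (K i : Set UI)) ⊆ nbhd (NN ⇑f (b j)) (δ m)

/-- `(K, f) ∈ 𝒳`: the projection of `𝒴 = ⋃_k 𝒴_k` to `𝒦^ℕ × C(I)`. -/
def memXcal (K : ℕ → KSp) (f : C(UI, ℝ)) : Prop :=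
  ∃ n δ a b k, memYk K f n δ a b k

private lemma slope_upper {F g : ℝ → ℝ} (hFc : ContinuousOn F (Set.Icc 0 1))
    (hder : ∀ c ∈ Set.Ioo (0:ℝ) 1, HasDerivAt F (g c) c)
    {u v b : ℝ} (hu : 0 ≤ u) (hv : v ≤ 1) (huv : u ≤ v)
    (hb : ∀ c ∈ Set.Ioo u v, g c ≤ b) : F v - F u ≤ b * (v - u) := by
  rcases eq_or_lt_of_le huv with rfl | h
  · simp
  · obtain ⟨c, hc, hceq⟩ := exists_hasDerivAt_eq_slope F g h
      (hFc.mono (Set.Icc_subset_Icc hu hv))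
      (fun t ht => hder t ⟨hu.trans_lt ht.1, ht.2.trans_le hv⟩)
    have h1 : (F v - F u) / (v - u) ≤ b := hceq ▸ hb c hc
    have h2 : (0:ℝ) < v - u := sub_pos.2 h
    calc F v - F u = (F v - F u) / (v - u) * (v - u) := by field_simp
      _ ≤ b * (v - u) := mul_le_mul_of_nonneg_right h1 h2.le

private lemma slope_lower {F g : ℝ → ℝ} (hFc : ContinuousOn F (Set.Icc 0 1))
    (hder : ∀ c ∈ Set.Ioo (0:ℝ) 1, HasDerivAt F (g c) c)
    {u v b : ℝ} (hu : 0 ≤ u) (hv : v ≤ 1) (huv : u ≤ v)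
    (hb : ∀ c ∈ Set.Ioo u v, b ≤ g c) : b * (v - u) ≤ F v - F u := by
  have h := slope_upper (F := fun t => -F t) (g := fun t => -g t) hFc.neg
    (fun c hc => (hder c hc).neg) hu hv huv (b := -b) (fun c hc => neg_le_neg (hb c hc))
  nlinarith [h]

set_option maxHeartbeats 1000000 in
private lemma coreUp (f : UI → ℝ) (hf : IsC1 f) (a b : ℝ) (ha : 0 < a) (hab : a < b) :
    ∃ δ > 0, nbhd (NplusUp f a) δ ⊆ NplusUp f b := by
  classical
  set F := Set.IccExtend (zero_le_one : (0:ℝ) ≤ 1) f with hFdef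
  have hFc : ContinuousOn F (Set.Icc 0 1) := hf.continuousOn
  set g : ℝ → ℝ := derivWithin F (Set.Icc 0 1) with hgdef
  have hgc : ContinuousOn g (Set.Icc 0 1) :=
    hf.continuousOn_derivWithin (uniqueDiffOn_Icc one_pos) le_rfl
  have hder : ∀ c ∈ Set.Ioo (0:ℝ) 1, HasDerivAt F (g c) c := by
    intro c hc
    have h2 : Set.Icc (0:ℝ) 1 ∈ nhds c := Icc_mem_nhds hc.1 hc.2
    have h3 : DifferentiableAt ℝ F c :=
      ((hf.differentiableOn one_ne_zero) c (Set.Ioo_subset_Icc_self hc)).differentiableAt h2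
    have h4 : g c = deriv F c := derivWithin_of_mem_nhds h2
    rw [h4]; exact h3.hasDerivAt
  obtain ⟨M, hM⟩ := isCompact_Icc.exists_bound_of_continuousOn hgc
  have hM0 : 0 ≤ M := le_trans (norm_nonneg _) (hM 0 (by norm_num))
  have hM' : ∀ s ∈ Set.Icc (0:ℝ) 1, |g s| ≤ M := by
    intro s hs; simpa [Real.norm_eq_abs] using hM s hs
  obtain ⟨η₀, hη₀, hu⟩ := Metric.uniformContinuousOn_iff.1
    (isCompact_Icc.uniformContinuousOn_of_continuous hgc) (b - a) (sub_pos.2 hab)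
  have hFval : ∀ z : UI, F (z:ℝ) = f z := fun z => Set.IccExtend_val _ f z
  have hFmem : ∀ (z:ℝ) (hz : z ∈ Set.Icc (0:ℝ) 1), F z = f ⟨z,hz⟩ :=
    fun z hz => Set.IccExtend_of_mem _ f hz
  clear_value F g
  have hba : (0:ℝ) < b - a := sub_pos.2 hab
  have hpow : (2:ℝ)^(-b) < 2^(-a) :=
    Real.rpow_lt_rpow_of_exponent_lt (by norm_num) (by linarith)
  have hpa : (0:ℝ) < 2^(-a) := Real.rpow_pos_of_pos (by norm_num) _
  have hpb : (0:ℝ) < 2^(-b) := Real.rpow_pos_of_pos (by norm_num) _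
  set η : ℝ := η₀/4 with hηdef
  have hη : 0 < η := by positivity
  set D : ℝ := (b-a)*η/(M+a+1) with hDdef
  have hMa1 : (0:ℝ) < M+a+1 := by linarith
  have hD : 0 < D := by positivity
  have hDkey : (M+a+1)*D = (b-a)*η := by rw [hDdef]; field_simp
  refine ⟨min (2^(-a) - 2^(-b)) (min η D), lt_min (by linarith) (lt_min hη hD), ?_⟩
  intro x' hx'
  simp only [nbhd, Set.mem_iUnion, Metric.mem_ball] at hx'
  obtain ⟨x, hx, hd⟩ := hx'
  rw [Subtype.dist_eq, Real.dist_eq, lt_min_iff, lt_min_iff] at hd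
  obtain ⟨hd1, hd2, hd3⟩ := hd
  rw [abs_lt] at hd1 hd2 hd3
  obtain ⟨hx1, hx2⟩ := hx
  have hx0 : (0:ℝ) ≤ x := x.2.1
  have hx'0 : (0:ℝ) ≤ x' := x'.2.1
  -- find p near x with g p ≤ a, via MVT on [x, x+t]
  set t : ℝ := min (2^(-a)) (η₀/8) with htdef
  have ht0 : 0 < t := lt_min hpa (by linarith)
  have hta : t ≤ 2^(-a) := min_le_left _ _
  have htη : t ≤ η₀/8 := min_le_right _ _
  have hxt1 : (x:ℝ) + t ≤ 1 := by linarith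
  obtain ⟨c, hc, hceq⟩ := exists_hasDerivAt_eq_slope F g (by linarith : (x:ℝ) < (x:ℝ) + t)
    (hFc.mono (Set.Icc_subset_Icc hx0 hxt1))
    (fun s hs => hder s ⟨hx0.trans_lt hs.1, hs.2.trans_le hxt1⟩)
  have hyy : ((x:ℝ)+t) ∈ Set.Icc (0:ℝ) 1 := ⟨by linarith, hxt1⟩
  have hgca : g c ≤ a := by
    have h5 : F ((x:ℝ)+t) - F (x:ℝ) ≤ a * t := by
      rw [hFmem _ hyy, hFval x]
      have := hx2 ⟨(x:ℝ)+t, hyy⟩ (by show (x:ℝ) ≤ (x:ℝ)+t; linarith)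
        (by show (x:ℝ)+t ≤ (x:ℝ)+2^(-a); linarith)
      simpa using this
    rw [hceq]
    have he : ((x:ℝ) + t - (x:ℝ)) = t := by ring
    rw [he, div_le_iff₀ ht0]
    linarith
  have hcx1 : (x:ℝ) < c := hc.1
  have hcx2 : c < (x:ℝ) + t := hc.2
  have hcmem : c ∈ Set.Icc (0:ℝ) 1 := ⟨by linarith, by linarith⟩
  refine ⟨by linarith, ?_⟩
  intro y hy1 hy2
  have hy0 : (0:ℝ) ≤ y := y.2.1
  have hy1' : (y:ℝ) ≤ 1 := y.2.2
  rcases le_or_gt ((y:ℝ) - x') η with hcase | hcase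
  · -- near case
    have hmain : F (y:ℝ) - F (x':ℝ) ≤ b * ((y:ℝ) - x') := by
      apply slope_upper hFc hder hx'0 hy1' hy1
      intro s hs
      have hs1 : (x':ℝ) < s := hs.1
      have hs2 : s < (y:ℝ) := hs.2
      have hsmem : s ∈ Set.Icc (0:ℝ) 1 := ⟨by linarith, by linarith⟩
      have habs : |s - c| < η₀ := by rw [abs_lt]; constructor <;> [linarith; linarith]
      have := hu s hsmem c hcmem (by rw [Real.dist_eq]; exact habs)
      rw [Real.dist_eq, abs_lt] at this
      linarith [this.2]
    rw [← hFval y, ← hFval x']; linarith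
  · -- far case
    have hyx : (x:ℝ) ≤ y := by
      by_contra hlt; push_neg at hlt
      linarith
    have hyub : (y:ℝ) ≤ (x:ℝ) + 2^(-a) := by linarith
    have hka : f y - f x ≤ a * ((y:ℝ) - x) := hx2 y hyx hyub
    -- Lipschitz bound on |f x - f x'|
    have key : ∀ u v : UI, (u:ℝ) ≤ v → |f v - f u| ≤ M * ((v:ℝ) - u) := by
      intro u v huv
      have hsub : ∀ s ∈ Set.Ioo (u:ℝ) (v:ℝ), s ∈ Set.Icc (0:ℝ) 1 :=
        fun s hs => ⟨le_trans u.2.1 hs.1.le, le_trans hs.2.le v.2.2⟩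
      have h1 := slope_upper hFc hder u.2.1 v.2.2 huv (b := M)
        (fun s hs => (abs_le.1 (hM' s (hsub s hs))).2)
      have h2 := slope_lower hFc hder u.2.1 v.2.2 huv (b := -M)
        (fun s hs => (abs_le.1 (hM' s (hsub s hs))).1)
      rw [hFval, hFval] at h1 h2
      rw [abs_le]; constructor <;> nlinarith
    have hfar : f x - f x' ≤ M * |(x:ℝ) - (x':ℝ)| := by
      rcases le_total (x':ℝ) (x:ℝ) with h | h
      · have h1 := key x' x h
        have h2 : (x:ℝ) - x' ≤ |(x:ℝ) - x'| := le_abs_self _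
        have h3 := (abs_le.1 h1).2
        nlinarith [abs_nonneg ((x:ℝ) - (x':ℝ))]
      · have h1 := key x x' h
        have h3 := (abs_le.1 h1).1
        have h2 : (x':ℝ) - x ≤ |(x:ℝ) - x'| := by rw [abs_sub_comm]; exact le_abs_self _
        nlinarith [abs_nonneg ((x:ℝ) - (x':ℝ))]
    have hA : |(x:ℝ) - (x':ℝ)| < D := by
      rw [abs_sub_comm, abs_lt]; exact hd3
    have hAnn : 0 ≤ |(x:ℝ) - (x':ℝ)| := abs_nonneg _
    have hxx' : (x':ℝ) - x ≤ |(x:ℝ) - (x':ℝ)| := by rw [abs_sub_comm]; exact le_abs_self _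
    -- combine
    have h6 : (M+a) * |(x:ℝ) - (x':ℝ)| ≤ (b-a) * η := by nlinarith
    nlinarith [mul_le_mul_of_nonneg_left hxx' ha.le]

set_option maxHeartbeats 1000000 in
private lemma coreDown (f : UI → ℝ) (hf : IsC1 f) (a b : ℝ) (ha : 0 < a) (hab : a < b) :
    ∃ δ > 0, nbhd (NminusLow f a) δ ⊆ NminusLow f b := by
  classical
  set F := Set.IccExtend (zero_le_one : (0:ℝ) ≤ 1) f with hFdef
  have hFc : ContinuousOn F (Set.Icc 0 1) := hf.continuousOn
  set g : ℝ → ℝ := derivWithin F (Set.Icc 0 1) with hgdef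
  have hgc : ContinuousOn g (Set.Icc 0 1) :=
    hf.continuousOn_derivWithin (uniqueDiffOn_Icc one_pos) le_rfl
  have hder : ∀ c ∈ Set.Ioo (0:ℝ) 1, HasDerivAt F (g c) c := by
    intro c hc
    have h2 : Set.Icc (0:ℝ) 1 ∈ nhds c := Icc_mem_nhds hc.1 hc.2
    have h3 : DifferentiableAt ℝ F c :=
      ((hf.differentiableOn one_ne_zero) c (Set.Ioo_subset_Icc_self hc)).differentiableAt h2
    have h4 : g c = deriv F c := derivWithin_of_mem_nhds h2
    rw [h4]; exact h3.hasDerivAt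
  obtain ⟨M, hM⟩ := isCompact_Icc.exists_bound_of_continuousOn hgc
  have hM0 : 0 ≤ M := le_trans (norm_nonneg _) (hM 0 (by norm_num))
  have hM' : ∀ s ∈ Set.Icc (0:ℝ) 1, |g s| ≤ M := by
    intro s hs; simpa [Real.norm_eq_abs] using hM s hs
  obtain ⟨η₀, hη₀, hu⟩ := Metric.uniformContinuousOn_iff.1
    (isCompact_Icc.uniformContinuousOn_of_continuous hgc) (b - a) (sub_pos.2 hab)
  have hFval : ∀ z : UI, F (z:ℝ) = f z := fun z => Set.IccExtend_val _ f z
  have hFmem : ∀ (z:ℝ) (hz : z ∈ Set.Icc (0:ℝ) 1), F z = f ⟨z,hz⟩ :=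
    fun z hz => Set.IccExtend_of_mem _ f hz
  clear_value F g
  have hba : (0:ℝ) < b - a := sub_pos.2 hab
  have hpow : (2:ℝ)^(-b) < 2^(-a) :=
    Real.rpow_lt_rpow_of_exponent_lt (by norm_num) (by linarith)
  have hpa : (0:ℝ) < 2^(-a) := Real.rpow_pos_of_pos (by norm_num) _
  have hpb : (0:ℝ) < 2^(-b) := Real.rpow_pos_of_pos (by norm_num) _
  set η : ℝ := η₀/4 with hηdef
  have hη : 0 < η := by positivity
  set D : ℝ := (b-a)*η/(M+a+1) with hDdef
  have hMa1 : (0:ℝ) < M+a+1 := by linarith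
  have hD : 0 < D := by positivity
  have hDkey : (M+a+1)*D = (b-a)*η := by rw [hDdef]; field_simp
  refine ⟨min (2^(-a) - 2^(-b)) (min η D), lt_min (by linarith) (lt_min hη hD), ?_⟩
  intro x' hx'
  simp only [nbhd, Set.mem_iUnion, Metric.mem_ball] at hx'
  obtain ⟨x, hx, hd⟩ := hx'
  rw [Subtype.dist_eq, Real.dist_eq, lt_min_iff, lt_min_iff] at hd
  obtain ⟨hd1, hd2, hd3⟩ := hd
  rw [abs_lt] at hd1 hd2 hd3
  obtain ⟨hx1, hx2⟩ := hx
  have hx0 : (x:ℝ) ≤ 1 := x.2.2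
  have hx'1 : (x':ℝ) ≤ 1 := x'.2.2
  -- find c near x with -a ≤ g c, via MVT on [x-t, x]
  set t : ℝ := min (2^(-a)) (η₀/8) with htdef
  have ht0 : 0 < t := lt_min hpa (by linarith)
  have hta : t ≤ 2^(-a) := min_le_left _ _
  have htη : t ≤ η₀/8 := min_le_right _ _
  have hxt0 : (0:ℝ) ≤ (x:ℝ) - t := by linarith
  obtain ⟨c, hc, hceq⟩ := exists_hasDerivAt_eq_slope F g (by linarith : (x:ℝ) - t < (x:ℝ))
    (hFc.mono (Set.Icc_subset_Icc hxt0 hx0))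
    (fun s hs => hder s ⟨hxt0.trans_lt hs.1, hs.2.trans_le hx0⟩)
  have hyy : ((x:ℝ)-t) ∈ Set.Icc (0:ℝ) 1 := ⟨hxt0, by linarith⟩
  have hgca : -a ≤ g c := by
    have h5 : -a * t ≤ F (x:ℝ) - F ((x:ℝ)-t) := by
      rw [hFmem _ hyy, hFval x]
      have := hx2 ⟨(x:ℝ)-t, hyy⟩ (by show (x:ℝ)-2^(-a) ≤ (x:ℝ)-t; linarith)
        (by show (x:ℝ)-t ≤ (x:ℝ); linarith)
      have h7 : f (⟨(x:ℝ)-t, hyy⟩ : UI) - f x ≤ -a * (((x:ℝ)-t) - (x:ℝ)) := by simpa using this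
      nlinarith [h7]
    rw [hceq]
    have he : ((x:ℝ) - ((x:ℝ) - t)) = t := by ring
    rw [he, le_div_iff₀ ht0]
    linarith
  have hcx1 : (x:ℝ) - t < c := hc.1
  have hcx2 : c < (x:ℝ) := hc.2
  have hcmem : c ∈ Set.Icc (0:ℝ) 1 := ⟨by linarith, by linarith⟩
  refine ⟨by linarith, ?_⟩
  intro y hy1 hy2
  have hy0 : (0:ℝ) ≤ y := y.2.1
  have hy1' : (y:ℝ) ≤ 1 := y.2.2
  rcases le_or_gt ((x':ℝ) - y) η with hcase | hcase
  · -- near case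
    have hmain : -b * ((x':ℝ) - y) ≤ F (x':ℝ) - F (y:ℝ) := by
      apply slope_lower hFc hder hy0 hx'1 hy2
      intro s hs
      have hs1 : (y:ℝ) < s := hs.1
      have hs2 : s < (x':ℝ) := hs.2
      have hsmem : s ∈ Set.Icc (0:ℝ) 1 := ⟨by linarith, by linarith⟩
      have habs : |s - c| < η₀ := by rw [abs_lt]; constructor <;> [linarith; linarith]
      have := hu s hsmem c hcmem (by rw [Real.dist_eq]; exact habs)
      rw [Real.dist_eq, abs_lt] at this
      linarith [this.1]
    rw [hFval, hFval] at hmain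
    nlinarith [hmain]
  · -- far case
    have hyx : (y:ℝ) ≤ x := by
      by_contra hlt; push_neg at hlt
      linarith
    have hylb : (x:ℝ) - 2^(-a) ≤ (y:ℝ) := by linarith
    have hka : f y - f x ≤ -a * ((y:ℝ) - x) := hx2 y hylb hyx
    have key : ∀ u v : UI, (u:ℝ) ≤ v → |f v - f u| ≤ M * ((v:ℝ) - u) := by
      intro u v huv
      have hsub : ∀ s ∈ Set.Ioo (u:ℝ) (v:ℝ), s ∈ Set.Icc (0:ℝ) 1 :=
        fun s hs => ⟨le_trans u.2.1 hs.1.le, le_trans hs.2.le v.2.2⟩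
      have h1 := slope_upper hFc hder u.2.1 v.2.2 huv (b := M)
        (fun s hs => (abs_le.1 (hM' s (hsub s hs))).2)
      have h2 := slope_lower hFc hder u.2.1 v.2.2 huv (b := -M)
        (fun s hs => (abs_le.1 (hM' s (hsub s hs))).1)
      rw [hFval, hFval] at h1 h2
      rw [abs_le]; constructor <;> nlinarith
    have hfar : f x - f x' ≤ M * |(x:ℝ) - (x':ℝ)| := by
      rcases le_total (x':ℝ) (x:ℝ) with h | h
      · have h1 := key x' x h
        have h2 : (x:ℝ) - x' ≤ |(x:ℝ) - x'| := le_abs_self _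
        have h3 := (abs_le.1 h1).2
        nlinarith [abs_nonneg ((x:ℝ) - (x':ℝ))]
      · have h1 := key x x' h
        have h3 := (abs_le.1 h1).1
        have h2 : (x':ℝ) - x ≤ |(x:ℝ) - x'| := by rw [abs_sub_comm]; exact le_abs_self _
        nlinarith [abs_nonneg ((x:ℝ) - (x':ℝ))]
    have hA : |(x:ℝ) - (x':ℝ)| < D := by
      rw [abs_sub_comm, abs_lt]; exact hd3
    have hAnn : 0 ≤ |(x:ℝ) - (x':ℝ)| := abs_nonneg _
    have hxx' : (x:ℝ) - x' ≤ |(x:ℝ) - (x':ℝ)| := le_abs_self _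
    have h6 : (M+a) * |(x:ℝ) - (x':ℝ)| ≤ (b-a) * η := by nlinarith
    nlinarith [mul_le_mul_of_nonneg_left hxx' ha.le]


private lemma isC1_neg {f : UI → ℝ} (hf : IsC1 f) : IsC1 (fun x => -f x) := by
  have h : Set.IccExtend (zero_le_one : (0:ℝ) ≤ 1) (fun x => -f x)
      = fun t => -(Set.IccExtend (zero_le_one : (0:ℝ) ≤ 1) f t) := by
    funext t; simp [Set.IccExtend]
  unfold IsC1
  rw [h]
  exact hf.neg

private lemma nplusLow_eq (f : UI → ℝ) (a : ℝ) :
    NplusLow f a = NplusUp (fun x => -f x) a := by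
  ext x
  simp only [NplusLow, NplusUp, Set.mem_setOf_eq]
  constructor <;> rintro ⟨h1, h2⟩ <;>
    exact ⟨h1, fun y hy1 hy2 => by have := h2 y hy1 hy2; beta_reduce at this ⊢; linarith⟩

private lemma nminusUp_eq (f : UI → ℝ) (a : ℝ) :
    NminusUp f a = NminusLow (fun x => -f x) a := by
  ext x
  simp only [NminusUp, NminusLow, Set.mem_setOf_eq]
  constructor <;> rintro ⟨h1, h2⟩ <;>
    exact ⟨h1, fun y hy1 hy2 => by have := h2 y hy1 hy2; beta_reduce at this ⊢; linarith⟩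

private lemma nbhd_mono (A : Set UI) {r s : ℝ} (h : r ≤ s) : nbhd A r ⊆ nbhd A s := by
  intro x hx
  simp only [nbhd, Set.mem_iUnion, Metric.mem_ball] at hx ⊢
  obtain ⟨p, hp, h2⟩ := hx
  exact ⟨p, hp, lt_of_lt_of_le h2 h⟩


/-- If `f ∈ C¹(I)` and `0 < a < b`, then `B(N̂(f,a),δ) ⊆ N̂(f,b)` and
`B(Ň(f,a),δ) ⊆ Ň(f,b)` for some `δ > 0`. -/
theorem nbhd_N_subset_of_C1 (f : UI → ℝ) (hf : IsC1 f) (a b : ℝ) (ha : 0 < a) (hab : a < b) :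
    ∃ δ > 0, nbhd (Nhat f a) δ ⊆ Nhat f b ∧ nbhd (Ncheck f a) δ ⊆ Ncheck f b := by
  obtain ⟨δ1, hδ1, h1⟩ := coreUp f hf a b ha hab
  obtain ⟨δ2, hδ2, h2⟩ := coreDown f hf a b ha hab
  obtain ⟨δ3, hδ3, h3⟩ := coreUp (fun x => -f x) (isC1_neg hf) a b ha hab
  obtain ⟨δ4, hδ4, h4⟩ := coreDown (fun x => -f x) (isC1_neg hf) a b ha hab
  set δ : ℝ := min (min δ1 δ2) (min δ3 δ4) with hδdef
  have hδ1' : δ ≤ δ1 := le_trans (min_le_left _ _) (min_le_left _ _)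
  have hδ2' : δ ≤ δ2 := le_trans (min_le_left _ _) (min_le_right _ _)
  have hδ3' : δ ≤ δ3 := le_trans (min_le_right _ _) (min_le_left _ _)
  have hδ4' : δ ≤ δ4 := le_trans (min_le_right _ _) (min_le_right _ _)
  refine ⟨δ, lt_min (lt_min hδ1 hδ2) (lt_min hδ3 hδ4), ?_, ?_⟩
  · intro z hz
    rw [Nhat] at hz ⊢
    simp only [nbhd, Set.mem_iUnion, Metric.mem_ball] at hz
    obtain ⟨p, hp, hd⟩ := hz
    rcases hp with hp | hp
    · exact Or.inl (h1 (nbhd_mono _ hδ1'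
        (by simp only [nbhd, Set.mem_iUnion, Metric.mem_ball]; exact ⟨p, hp, hd⟩)))
    · exact Or.inr (h2 (nbhd_mono _ hδ2'
        (by simp only [nbhd, Set.mem_iUnion, Metric.mem_ball]; exact ⟨p, hp, hd⟩)))
  · intro z hz
    rw [Ncheck, nplusLow_eq, nminusUp_eq] at hz ⊢
    simp only [nbhd, Set.mem_iUnion, Metric.mem_ball] at hz
    obtain ⟨p, hp, hd⟩ := hz
    rcases hp with hp | hp
    · exact Or.inl (h3 (nbhd_mono _ hδ3'
        (by simp only [nbhd, Set.mem_iUnion, Metric.mem_ball]; exact ⟨p, hp, hd⟩)))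
    · exact Or.inr (h4 (nbhd_mono _ hδ4'
        (by simp only [nbhd, Set.mem_iUnion, Metric.mem_ball]; exact ⟨p, hp, hd⟩)))

end
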